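/- Suppose ℝ is partitioned into three pairwise disjoint nonempty sets A₀, A₁, A₂ whose union is ℝ, such that each Aᵢ is a union of closed intervals (i.e., each connected component of each Aᵢ is a closed set), and such that between any point of Aⱼ and any point of A_k (for j ≠ k) there lies a point of the third set Aᵢ. Then uncountably many connected components of A₀ ∪ A₁ ∪ A₂'s pieces are singletons; in particular at least one of the Aᵢ has a connected component consisting of a single point. -/
import Mathlib

open Set

/-- If on an open interval every point lies in the interior of its "component",
then all points of the interval have the same component. -/
private lemma comp_const_on {comp : ℝ → Set ℝ}
    (hmem : ∀ z, z ∈ comp z)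
    (hcl : ∀ z, IsClosed (comp z))
    (heq : ∀ z z', z' ∈ comp z → comp z' = comp z)
    {u v : ℝ}
    (hD : ∀ t ∈ Set.Ioo u v, t ∈ interior (comp t)) :
    ∀ t ∈ Set.Ioo u v, ∀ t' ∈ Set.Ioo u v, t ≤ t' → comp t' = comp t := by
  intro t ht t' ht' hle
  by_contra hne
  have ht'n : t' ∉ comp t := fun h => hne (heq t t' h)
  have hKne : (comp t ∩ Set.Icc t t').Nonempty := ⟨t, hmem t, le_refl t, hle⟩
  have hKcl : IsClosed (comp t ∩ Set.Icc t t') := (hcl t).inter isClosed_Icc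
  have hKbdd : BddAbove (comp t ∩ Set.Icc t t') := ⟨t', fun z hz => hz.2.2⟩
  set s := sSup (comp t ∩ Set.Icc t t') with hs
  have hsK : s ∈ comp t ∩ Set.Icc t t' := hKcl.csSup_mem hKne hKbdd
  have hst' : s < t' := lt_of_le_of_ne hsK.2.2 (fun h => ht'n (h ▸ hsK.1))
  have hsIoo : s ∈ Set.Ioo u v := ⟨lt_of_lt_of_le ht.1 hsK.2.1, lt_trans hst' ht'.2⟩
  have hsint : s ∈ interior (comp s) := hD s hsIoo
  rw [heq t s hsK.1] at hsint
  obtain ⟨ε, hε, hball⟩ := Metric.isOpen_iff.mp isOpen_interior s hsint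
  set w := min (s + ε / 2) ((s + t') / 2) with hw
  have hw1 : s < w := lt_min (by linarith) (by linarith)
  have hw2 : w ≤ t' := le_trans (min_le_right _ _) (by linarith)
  have hwb : w ∈ Metric.ball s ε := by
    rw [Metric.mem_ball, Real.dist_eq, abs_lt]
    have := min_le_left (s + ε / 2) ((s + t') / 2)
    constructor <;> linarith
  have hwK : w ∈ comp t ∩ Set.Icc t t' :=
    ⟨interior_subset (hball hwb), le_trans hsK.2.1 (le_of_lt hw1), hw2⟩
  exact absurd (le_csSup hKbdd hwK) (not_le.mpr hw1)

private lemma comp_interval {comp : ℝ → Set ℝ}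
    (hmem : ∀ z, z ∈ comp z)
    (hcl : ∀ z, IsClosed (comp z))
    (heq : ∀ z z', z' ∈ comp z → comp z' = comp z)
    {u v : ℝ} (huv : u < v)
    (hD : ∀ t ∈ Set.Ioo u v, t ∈ interior (comp t)) :
    Set.Ioo u v ⊆ comp u ∧ comp v = comp u := by
  set t₀ := (u + v) / 2 with ht₀def
  have ht₀ : t₀ ∈ Set.Ioo u v := ⟨by simp only [ht₀def]; linarith, by simp only [ht₀def]; linarith⟩
  have hsub : Set.Ioo u v ⊆ comp t₀ := by
    intro t ht
    rcases le_total t t₀ with h | h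
    · rw [comp_const_on hmem hcl heq hD t ht t₀ ht₀ h]; exact hmem t
    · rw [← comp_const_on hmem hcl heq hD t₀ ht₀ t ht h]; exact hmem t
  have hicc : Set.Icc u v ⊆ comp t₀ := by
    rw [← closure_Ioo (ne_of_lt huv)]
    calc closure (Set.Ioo u v) ⊆ closure (comp t₀) := closure_mono hsub
    _ = comp t₀ := (hcl t₀).closure_eq
  have hu : comp u = comp t₀ := heq t₀ u (hicc ⟨le_refl u, le_of_lt huv⟩)
  have hv : comp v = comp t₀ := heq t₀ v (hicc ⟨le_of_lt huv, le_refl v⟩)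
  exact ⟨fun t ht => hu ▸ hsub ht, hv.trans hu.symm⟩

theorem stmt11 (A : Fin 3 → Set ℝ)
    (hdisj : ∀ i j, i ≠ j → Disjoint (A i) (A j))
    (hne : ∀ i, (A i).Nonempty)
    (hcover : (⋃ i, A i) = Set.univ)
    (hcomp : ∀ i, ∀ x ∈ A i, IsClosed (connectedComponentIn (A i) x))
    (hbetween : ∀ i j k : Fin 3, i ≠ j → j ≠ k → i ≠ k →
      ∀ x ∈ A j, ∀ y ∈ A k, x < y → ∃ z ∈ A i, x < z ∧ z < y) :
    ¬ Set.Countable {x : ℝ | ∃ i, x ∈ A i ∧ connectedComponentIn (A i) x = {x}} ∧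
    ∃ i, ∃ x ∈ A i, connectedComponentIn (A i) x = {x} := by
  classical
  have hmemA : ∀ z : ℝ, ∃ i, z ∈ A i := by
    intro z
    have : z ∈ ⋃ i, A i := hcover.symm ▸ Set.mem_univ z
    exact Set.mem_iUnion.mp this
  set idx : ℝ → Fin 3 := fun z => (hmemA z).choose with hidxdef
  have hidx : ∀ z, z ∈ A (idx z) := fun z => (hmemA z).choose_spec
  have hidx_eq : ∀ z i, z ∈ A i → idx z = i := by
    intro z i h
    by_contra hne'
    exact Set.disjoint_left.mp (hdisj _ _ hne') (hidx z) h
  set comp : ℝ → Set ℝ := fun z => connectedComponentIn (A (idx z)) z with hcompdef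
  have hmem : ∀ z, z ∈ comp z := fun z => mem_connectedComponentIn (hidx z)
  have hcl : ∀ z, IsClosed (comp z) := fun z => hcomp _ z (hidx z)
  have hsub : ∀ z, comp z ⊆ A (idx z) := fun z => connectedComponentIn_subset _ _
  have heq : ∀ z z', z' ∈ comp z → comp z' = comp z := by
    intro z z' h
    have h1 : z' ∈ A (idx z) := hsub z h
    have h2 : idx z' = idx z := hidx_eq z' _ h1
    show connectedComponentIn (A (idx z')) z' = connectedComponentIn (A (idx z)) z
    rw [h2]
    exact (connectedComponentIn_eq h).symm
  have hord : ∀ z, OrdConnected (comp z) :=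
    fun z => isPreconnected_connectedComponentIn.ordConnected
  set D := {z : ℝ | z ∉ interior (comp z)} with hDdef
  have hDcl : IsClosed D := by
    have hc : Dᶜ = ⋃ w, interior (comp w) := by
      ext z
      simp only [Set.mem_compl_iff, hDdef, Set.mem_setOf_eq, not_not, Set.mem_iUnion]
      constructor
      · exact fun h => ⟨z, h⟩
      · rintro ⟨w, hw⟩
        have hzw : z ∈ comp w := interior_subset hw
        rw [heq w z hzw]
        exact hw
    rw [← isOpen_compl_iff, hc]
    exact isOpen_iUnion fun w => isOpen_interior
  have hbound : ∀ z ∈ D, (∀ w ∈ comp z, z ≤ w) ∨ (∀ w ∈ comp z, w ≤ z) := by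
    intro z hz
    by_contra h
    push_neg at h
    obtain ⟨⟨w, hw, hwz⟩, ⟨p, hp, hpz⟩⟩ := h
    have hicc : Set.Icc w p ⊆ comp z := (hord z).out hw hp
    exact hz (mem_interior_iff_mem_nhds.mpr
      (Filter.mem_of_superset (Ioo_mem_nhds hwz hpz) (Set.Ioo_subset_Icc_self.trans hicc)))
  have hAi : ∀ z i, z ∈ A i → comp z ⊆ A i := by
    intro z i h
    have := hidx_eq z i h
    rw [← this]
    exact hsub z
  -- D is nonempty
  have hDne : D.Nonempty := by
    rw [Set.nonempty_iff_ne_empty]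
    intro hDe
    have hD0 : ∀ t : ℝ, t ∈ interior (comp t) := by
      intro t
      by_contra ht
      exact absurd (hDe ▸ ht : t ∈ (∅ : Set ℝ)) (Set.notMem_empty t)
    obtain ⟨x₀, hx₀⟩ := hne 0
    obtain ⟨x₁, hx₁⟩ := hne 1
    have h01 : x₀ ≠ x₁ := by
      intro h
      exact Set.disjoint_left.mp (hdisj 0 1 (by decide)) hx₀ (h ▸ hx₁)
    have key : ∀ a b : ℝ, a < b → comp b = comp a := fun a b hab =>
      (comp_interval hmem hcl heq hab (fun t _ => hD0 t)).2
    rcases h01.lt_or_gt with h | h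
    · have h1 : comp x₁ = comp x₀ := key _ _ h
      have : x₁ ∈ A 0 := hAi x₀ 0 hx₀ (h1 ▸ hmem x₁)
      exact Set.disjoint_left.mp (hdisj 0 1 (by decide)) this hx₁
    · have h1 : comp x₀ = comp x₁ := key _ _ h
      have : x₀ ∈ A 1 := hAi x₁ 1 hx₁ (h1 ▸ hmem x₀)
      exact Set.disjoint_left.mp (hdisj 0 1 (by decide)) hx₀ this
  -- D is perfect
  have hperfect : Perfect D := by
    constructor
    · exact hDcl
    · rw [preperfect_iff_nhds]
      intro x hx U hU
      by_contra hcon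
      push_neg at hcon
      obtain ⟨ε, hε, hball⟩ := Metric.mem_nhds_iff.mp hU
      have hnoD : ∀ t : ℝ, t ≠ x → t ∈ Set.Ioo (x - ε) (x + ε) → t ∈ interior (comp t) := by
        intro t htx ht
        by_contra hti
        have htU : t ∈ U := hball (by
          rw [Metric.mem_ball, Real.dist_eq, abs_lt]
          exact ⟨by linarith [ht.1], by linarith [ht.2]⟩)
        exact htx (hcon t ⟨htU, hti⟩)
      have hr : Set.Ioo x (x + ε) ⊆ comp x := by
        have := comp_interval hmem hcl heq (show x < x + ε by linarith)
          (fun t ht => hnoD t (ne_of_gt ht.1) ⟨by linarith [ht.1], ht.2⟩)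
        exact this.1
      have hl : Set.Ioo (x - ε) x ⊆ comp x := by
        have := comp_interval hmem hcl heq (show x - ε < x by linarith)
          (fun t ht => hnoD t (ne_of_lt ht.2) ⟨ht.1, by linarith [ht.2]⟩)
        intro t ht
        rw [this.2]
        exact this.1 ht
      have hall : Set.Ioo (x - ε) (x + ε) ⊆ comp x := by
        intro t ht
        rcases lt_trichotomy t x with h | h | h
        · exact hl ⟨ht.1, h⟩
        · rw [h]; exact hmem x
        · exact hr ⟨h, ht.2⟩
      exact hx (mem_interior_iff_mem_nhds.mpr
        (Filter.mem_of_superset (Ioo_mem_nhds (by linarith) (by linarith)) hall))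
  -- main countability claim
  have hScomp : ∀ z : ℝ, comp z = {z} →
      z ∈ {x : ℝ | ∃ i, x ∈ A i ∧ connectedComponentIn (A i) x = {x}} :=
    fun z h => ⟨idx z, hidx z, h⟩
  have main : ¬ Set.Countable {x : ℝ | ∃ i, x ∈ A i ∧ connectedComponentIn (A i) x = {x}} := by
    intro hSc
    set E := {z : ℝ | z ∈ D ∧ comp z ≠ {z}} with hEdef
    have hq : ∀ z ∈ E, ∃ q : ℚ, (q : ℝ) ∈ comp z ∧ (q : ℝ) ≠ z := by
      intro z hz
      obtain ⟨w, hw, hwz⟩ : ∃ w ∈ comp z, w ≠ z := by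
        by_contra h
        push_neg at h
        exact hz.2 (Set.eq_singleton_iff_unique_mem.mpr ⟨hmem z, h⟩)
      rcases hwz.lt_or_gt with h | h
      · obtain ⟨r, hr1, hr2⟩ := exists_rat_btwn h
        exact ⟨r, (hord z).out hw (hmem z) ⟨le_of_lt hr1, le_of_lt hr2⟩, ne_of_lt hr2⟩
      · obtain ⟨r, hr1, hr2⟩ := exists_rat_btwn h
        exact ⟨r, (hord z).out (hmem z) hw ⟨le_of_lt hr1, le_of_lt hr2⟩, ne_of_gt hr1⟩
    have hEc : E.Countable := by
      rw [← Set.countable_coe_iff]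
      choose q hq1 hq2 using fun z : E => hq z.1 z.2
      have hinj : Function.Injective (fun z : E => ((q z, decide ((z : ℝ) < (q z : ℝ))) : ℚ × Bool)) := by
        intro z z' hzz'
        simp only [Prod.mk.injEq] at hzz'
        obtain ⟨hqq, hbb⟩ := hzz'
        have hcc : comp (z : ℝ) = comp (z' : ℝ) := by
          have e1 : comp ((q z : ℝ)) = comp (z : ℝ) := heq _ _ (hq1 z)
          have e2 : comp ((q z' : ℝ)) = comp (z' : ℝ) := heq _ _ (hq1 z')
          rw [← e1, ← e2, hqq]
        have hz'mem : (z' : ℝ) ∈ comp (z : ℝ) := hcc ▸ hmem (z' : ℝ)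
        have hzmem : (z : ℝ) ∈ comp (z' : ℝ) := hcc.symm ▸ hmem (z : ℝ)
        rcases (hq2 z).lt_or_gt with h | h
        · -- q z < z, so z is an upper bound of comp z
          have hb : decide ((z : ℝ) < (q z : ℝ)) = false := by
            simp [not_lt.mpr (le_of_lt h)]
          have hb' : ¬ ((z' : ℝ) < (q z' : ℝ)) := by
            have := hb ▸ hbb
            simpa using this.symm
          have hub : ∀ w ∈ comp (z : ℝ), w ≤ (z : ℝ) := by
            rcases hbound _ z.2.1 with hlb | hub
            · exact absurd (hlb _ (hq1 z)) (not_le.mpr h)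
            · exact hub
          have hub' : ∀ w ∈ comp (z' : ℝ), w ≤ (z' : ℝ) := by
            rcases hbound _ z'.2.1 with hlb | hub'
            · have := hlb _ (hq1 z')
              have hlt : (q z' : ℝ) < (z' : ℝ) := by
                rcases (hq2 z').lt_or_gt with h' | h'
                · exact h'
                · exact absurd h' hb'
              exact absurd this (not_le.mpr hlt)
            · exact hub'
          have h1 : (z : ℝ) ≤ (z' : ℝ) := hub' _ (hcc ▸ hmem (z : ℝ))
          have h2 : (z' : ℝ) ≤ (z : ℝ) := hub _ hz'mem
          exact Subtype.ext (le_antisymm h1 h2)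
        · -- z < q z, so z is a lower bound of comp z
          have hb : decide ((z : ℝ) < (q z : ℝ)) = true := by simp [h]
          have hb' : (z' : ℝ) < (q z' : ℝ) := by
            have := hb ▸ hbb
            exact of_decide_eq_true this.symm
          have hlb : ∀ w ∈ comp (z : ℝ), (z : ℝ) ≤ w := by
            rcases hbound _ z.2.1 with hlb | hub
            · exact hlb
            · exact absurd (hub _ (hq1 z)) (not_le.mpr h)
          have hlb' : ∀ w ∈ comp (z' : ℝ), (z' : ℝ) ≤ w := by
            rcases hbound _ z'.2.1 with hlb' | hub'
            · exact hlb'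
            · exact absurd (hub' _ (hq1 z')) (not_le.mpr hb')
          have h1 : (z : ℝ) ≤ (z' : ℝ) := hlb _ hz'mem
          have h2 : (z' : ℝ) ≤ (z : ℝ) := hlb' _ hzmem
          exact Subtype.ext (le_antisymm h1 h2)
      exact Countable.of_equiv _ (Equiv.ofInjective _ hinj).symm
    have hDc : D.Countable := by
      apply Set.Countable.mono (s₂ := {x : ℝ | ∃ i, x ∈ A i ∧ connectedComponentIn (A i) x = {x}} ∪ E)
      · intro z hz
        by_cases h : comp z = {z}
        · exact Or.inl (hScomp z h)
        · exact Or.inr ⟨hz, h⟩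
      · exact hSc.union hEc
    obtain ⟨f, hfD, _, hfinj⟩ := hperfect.exists_nat_bool_injection hDne
    have hrc : (Set.range f).Countable := Set.Countable.mono hfD hDc
    have hcnt : Countable (ℕ → Bool) := by
      have := hrc.to_subtype
      exact Countable.of_equiv _ (Equiv.ofInjective f hfinj).symm
    obtain ⟨g, hg⟩ := exists_surjective_nat (ℕ → Bool)
    obtain ⟨n, hn⟩ := hg (fun m => !(g m m))
    have hdiag := congrFun hn n
    simp at hdiag
  refine ⟨main, ?_⟩
  have hSne : {x : ℝ | ∃ i, x ∈ A i ∧ connectedComponentIn (A i) x = {x}}.Nonempty := by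
    rw [Set.nonempty_iff_ne_empty]
    intro h
    exact main (h ▸ Set.countable_empty)
  obtain ⟨x, i, h1, h2⟩ := hSne
  exact ⟨i, x, h1, h2⟩
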